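/- Let 0 < p ≤ 1 and let n ≥ 3 be an integer. Let x_2, …, x_{n−1} ≥ 0 and u ≥ 0 be real numbers. Then Σ_{i=2}^{n−1} x_i^p + u^p ≤ ((n−1)/n)^p · ( Σ_{i=2}^{n−1} x_i^p + ( Σ_{i=2}^{n−1} x_i + n·u )^p ). -/

import Mathlib

/-- Scalar concavity inequality: `(n-2) * n^p + 1 ≤ (n-1) * (n-1)^p`. -/
lemma sn_scalar_ineq (p : ℝ) (hp0 : 0 < p) (hp1 : p ≤ 1) (n : ℕ) (hn : 3 ≤ n) :
    ((n : ℝ) - 2) * (n : ℝ) ^ p + 1 ≤ ((n : ℝ) - 1) * ((n : ℝ) - 1) ^ p := by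
  have hn3 : (3 : ℝ) ≤ (n : ℝ) := by exact_mod_cast hn
  have h1 : (0:ℝ) < (n : ℝ) - 1 := by linarith
  have hconc := Real.concaveOn_rpow (le_of_lt hp0) hp1
  set a : ℝ := ((n : ℝ) - 2) / ((n : ℝ) - 1) with ha
  set b : ℝ := 1 / ((n : ℝ) - 1) with hb
  have hanon : 0 ≤ a := div_nonneg (by linarith) (le_of_lt h1)
  have hbnon : 0 ≤ b := div_nonneg (by norm_num) (le_of_lt h1)
  have hab : a + b = 1 := by rw [ha, hb, ← add_div]; field_simp; ring
  have hcomb : a • (n : ℝ) + b • (1 : ℝ) = (n : ℝ) - 1 := by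
    simp only [smul_eq_mul, ha, hb]
    field_simp
    ring
  have := hconc.2 (Set.mem_Ici.mpr (by linarith : (0:ℝ) ≤ (n:ℝ)))
    (Set.mem_Ici.mpr (by norm_num : (0:ℝ) ≤ (1:ℝ))) hanon hbnon hab
  rw [hcomb] at this
  simp only [smul_eq_mul, Real.one_rpow, mul_one] at this
  have := mul_le_mul_of_nonneg_left this (le_of_lt h1)
  have hne : (n:ℝ) - 1 ≠ 0 := ne_of_gt h1
  have heq : ((n : ℝ) - 1) * (a * (n : ℝ) ^ p + b) = ((n : ℝ) - 2) * (n : ℝ) ^ p + 1 := by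
    rw [ha, hb]
    field_simp
  linarith [this, heq]

/-- the key inequality for the case `k = n - 1` in the proof of the sharp
`p`-variation bound on the star graph `S_n`, for `0 < p ≤ 1`. -/
theorem sn_case_k_eq_n_sub_one_inequality (p : ℝ) (hp0 : 0 < p) (hp1 : p ≤ 1)
    (n : ℕ) (hn : 3 ≤ n) (x : ℕ → ℝ) (u : ℝ) (hu : 0 ≤ u)
    (hx : ∀ i ∈ Finset.Icc 2 (n - 1), 0 ≤ x i) :
    ∑ i ∈ Finset.Icc 2 (n - 1), x i ^ p + u ^ p ≤
      (((n : ℝ) - 1) / n) ^ p *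
        (∑ i ∈ Finset.Icc 2 (n - 1), x i ^ p +
          (∑ i ∈ Finset.Icc 2 (n - 1), x i + (n : ℝ) * u) ^ p) := by
  have hn3 : (3 : ℝ) ≤ (n : ℝ) := by exact_mod_cast hn
  have hnpos : (0:ℝ) < n := by linarith
  set S : ℝ := ∑ i ∈ Finset.Icc 2 (n - 1), x i with hS
  set T : ℝ := S + (n : ℝ) * u with hT
  have hSnon : 0 ≤ S := Finset.sum_nonneg hx
  have hTnon : 0 ≤ T := by positivity
  have hST : S ≤ T := by nlinarith
  -- card of the index set
  have hcard : (Finset.Icc 2 (n - 1)).card = n - 2 := by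
    rw [Nat.card_Icc]; omega
  have hcardR : ((Finset.Icc 2 (n - 1)).card : ℝ) = (n : ℝ) - 2 := by
    rw [hcard, Nat.cast_sub (by omega : 2 ≤ n)]
    norm_num
  -- each x i ≤ S, hence x i ^ p ≤ T ^ p
  have hsum_le : ∑ i ∈ Finset.Icc 2 (n - 1), x i ^ p ≤ ((n:ℝ) - 2) * T ^ p := by
    rw [← hcardR]
    calc ∑ i ∈ Finset.Icc 2 (n - 1), x i ^ p
        ≤ ∑ _i ∈ Finset.Icc 2 (n - 1), T ^ p := by
          apply Finset.sum_le_sum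
          intro i hi
          apply Real.rpow_le_rpow (hx i hi) _ (le_of_lt hp0)
          calc x i ≤ S := Finset.single_le_sum hx hi
            _ ≤ T := hST
      _ = ((Finset.Icc 2 (n-1)).card : ℝ) * T ^ p := by
          rw [Finset.sum_const, nsmul_eq_mul]
  have hu_le : (n:ℝ) ^ p * u ^ p ≤ T ^ p := by
    rw [← Real.mul_rpow (le_of_lt hnpos) hu]
    exact Real.rpow_le_rpow (by positivity) (by nlinarith) (le_of_lt hp0)
  -- scalar facts
  have hnp : (0:ℝ) < (n:ℝ) ^ p := Real.rpow_pos_of_pos hnpos p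
  have hn1p : (0:ℝ) < ((n:ℝ) - 1) ^ p := Real.rpow_pos_of_pos (by linarith) p
  have hc : (((n : ℝ) - 1) / n) ^ p = ((n:ℝ) - 1) ^ p / (n:ℝ) ^ p :=
    Real.div_rpow (by linarith) (le_of_lt hnpos) p
  have hcle1 : ((n:ℝ) - 1) ^ p ≤ (n:ℝ) ^ p :=
    Real.rpow_le_rpow (by linarith) (by linarith) (le_of_lt hp0)
  have hscalar := sn_scalar_ineq p hp0 hp1 n hn
  -- main computation
  rw [hc]
  rw [div_mul_eq_mul_div, le_div_iff₀ hnp]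
  have hTp : 0 ≤ T ^ p := Real.rpow_nonneg hTnon p
  have hSp : 0 ≤ ∑ i ∈ Finset.Icc 2 (n - 1), x i ^ p :=
    Finset.sum_nonneg fun i hi => Real.rpow_nonneg (hx i hi) p
  -- Need: (S_p + u^p) * n^p ≤ (n-1)^p * (S_p + T^p)
  -- From hsum_le: (n^p - (n-1)^p) * S_p ≤ (n^p - (n-1)^p) * (n-2) * T^p
  have key : ((n:ℝ) ^ p - ((n:ℝ)-1) ^ p) * (∑ i ∈ Finset.Icc 2 (n - 1), x i ^ p)
      ≤ (((n:ℝ)-1) ^ p - 1) * T ^ p := by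
    calc ((n:ℝ) ^ p - ((n:ℝ)-1) ^ p) * (∑ i ∈ Finset.Icc 2 (n - 1), x i ^ p)
        ≤ ((n:ℝ) ^ p - ((n:ℝ)-1) ^ p) * (((n:ℝ) - 2) * T ^ p) :=
          mul_le_mul_of_nonneg_left hsum_le (by linarith)
      _ ≤ (((n:ℝ)-1) ^ p - 1) * T ^ p := by nlinarith
  nlinarith [mul_le_mul_of_nonneg_left hu_le (le_of_lt hn1p)]
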